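/- Let K be an invertible self-dual ℓ×ℓ matrix over F_2. Then for every i with 1 ≤ i ≤ ℓ and every w with 0 ≤ w ≤ ℓ, the inequality of the duality lemma holds with equality: E_{i,w} + E_{ℓ+1-i, ℓ-w} = binom(ℓ, w). -/

import Mathlib

/-- The support of a vector over `ZMod 2`. -/
def supp {ℓ : ℕ} (v : Fin ℓ → ZMod 2) : Set (Fin ℓ) := {j | v j ≠ 0}

/-- The Hamming weight of a vector over `ZMod 2`. -/
def wt {ℓ : ℕ} (v : Fin ℓ → ZMod 2) : ℕ :=
  (Finset.univ.filter fun j => v j ≠ 0).card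

/-- The kernel code `C_i`: the span of the rows `g_{i+1}, …, g_ℓ` of `K`
(rows of index `≥ i` in 0-based indexing). -/
def kernelCode {ℓ : ℕ} (K : Matrix (Fin ℓ) (Fin ℓ) (ZMod 2)) (i : ℕ) :
    Submodule (ZMod 2) (Fin ℓ → ZMod 2) :=
  Submodule.span (ZMod 2) {v | ∃ r : Fin ℓ, i ≤ (r : ℕ) ∧ v = K r}

/-- `e` is an uncorrectable erasure pattern for the bit-channel of (0-based) index `i`. -/
def Uncorrectable {ℓ : ℕ} (K : Matrix (Fin ℓ) (Fin ℓ) (ZMod 2)) (i : Fin ℓ)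
    (e : Fin ℓ → ZMod 2) : Prop :=
  ∃ u' u'' : Fin ℓ → ZMod 2,
    (∀ j, j < i → u' j = u'' j) ∧ u' i ≠ u'' i ∧
      ∀ j, e j = 0 → Matrix.vecMul u' K j = Matrix.vecMul u'' K j

/-- `E_{i,w}`: the number of uncorrectable erasure patterns of weight `w`
for bit-channel `i`. -/
noncomputable def Ecount {ℓ : ℕ} (K : Matrix (Fin ℓ) (Fin ℓ) (ZMod 2)) (i : Fin ℓ)
    (w : ℕ) : ℕ :=
  Nat.card {e : Fin ℓ → ZMod 2 // Uncorrectable K i e ∧ wt e = w}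

/-- `f_i(z) = ∑_{w=0}^{ℓ} E_{i,w} z^w (1-z)^{ℓ-w}`. -/
noncomputable def fpoly {ℓ : ℕ} (K : Matrix (Fin ℓ) (Fin ℓ) (ZMod 2)) (i : Fin ℓ)
    (z : ℝ) : ℝ :=
  ∑ w ∈ Finset.range (ℓ + 1), (Ecount K i w : ℝ) * z ^ w * (1 - z) ^ (ℓ - w)

/-- Dual code with respect to the standard bilinear form `⟨u,v⟩ = ∑ j, u j * v j`. -/
def dualCode {ℓ : ℕ} (C : Submodule (ZMod 2) (Fin ℓ → ZMod 2)) :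
    Submodule (ZMod 2) (Fin ℓ → ZMod 2) where
  carrier := {v | ∀ c ∈ C, ∑ j, v j * c j = 0}
  add_mem' := by
    intro a b ha hb c hc
    simpa [add_mul, Finset.sum_add_distrib] using by rw [ha c hc, hb c hc]; simp
  zero_mem' := by intro c hc; simp
  smul_mem' := by
    intro r a ha c hc
    simp only [Pi.smul_apply, smul_eq_mul, mul_assoc, ← Finset.mul_sum, Set.mem_setOf_eq]
    rw [ha c hc, mul_zero]

/-- `K` is self-dual if `C_i = C_{ℓ-i}^⊥` for all `0 ≤ i ≤ ℓ`. -/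
def SelfDual {ℓ : ℕ} (K : Matrix (Fin ℓ) (Fin ℓ) (ZMod 2)) : Prop :=
  ∀ i ≤ ℓ, kernelCode K i = dualCode (kernelCode K (ℓ - i))


section Aux

open Matrix Finset

variable {ℓ : ℕ}

lemma zmod2_ne_zero_iff (x : ZMod 2) : x ≠ 0 ↔ x = 1 := by revert x; decide

lemma zmod2_one_add_eq_zero_iff (x : ZMod 2) : 1 + x = 0 ↔ x = 1 := by revert x; decide

lemma vecMul_apply (K : Matrix (Fin ℓ) (Fin ℓ) (ZMod 2)) (d : Fin ℓ → ZMod 2) (j : Fin ℓ) :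
    Matrix.vecMul d K j = ∑ k, d k * K k j := rfl

lemma mem_kernelCode_iff (K : Matrix (Fin ℓ) (Fin ℓ) (ZMod 2)) (i : ℕ) (v : Fin ℓ → ZMod 2) :
    v ∈ kernelCode K i ↔
      ∃ d : Fin ℓ → ZMod 2, (∀ j : Fin ℓ, (j : ℕ) < i → d j = 0) ∧ v = Matrix.vecMul d K := by
  constructor
  · intro hv
    induction hv using Submodule.span_induction with
    | mem x hx =>
      obtain ⟨r, hr, rfl⟩ := hx
      exact ⟨Pi.single r 1, fun j hj => Pi.single_eq_of_ne (by rintro rfl; omega) 1,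
        by rw [Matrix.single_one_vecMul]; rfl⟩
    | zero => exact ⟨0, fun _ _ => rfl, by rw [Matrix.zero_vecMul]⟩
    | add x y hx hy ihx ihy =>
      obtain ⟨d, hd, rfl⟩ := ihx
      obtain ⟨d', hd', rfl⟩ := ihy
      exact ⟨d + d', fun j hj => by simp [hd j hj, hd' j hj], (Matrix.add_vecMul _ _ _).symm⟩
    | smul r x hx ihx =>
      obtain ⟨d, hd, rfl⟩ := ihx
      exact ⟨r • d, fun j hj => by simp [hd j hj], (Matrix.smul_vecMul _ _ _).symm⟩
  · rintro ⟨d, hd, rfl⟩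
    have : Matrix.vecMul d K = ∑ k, d k • K k := by
      funext j
      rw [_root_.vecMul_apply, Finset.sum_apply]
      rfl
    rw [this]
    refine Submodule.sum_mem _ fun k _ => ?_
    by_cases hk : i ≤ (k : ℕ)
    · exact Submodule.smul_mem _ _ (Submodule.subset_span ⟨k, hk, rfl⟩)
    · rw [hd k (by omega)]
      simp

lemma uncorrectable_iff (K : Matrix (Fin ℓ) (Fin ℓ) (ZMod 2)) (i : Fin ℓ) (e : Fin ℓ → ZMod 2) :
    Uncorrectable K i e ↔
      ∃ d : Fin ℓ → ZMod 2, (∀ j : Fin ℓ, (j : ℕ) < (i : ℕ) → d j = 0) ∧ d i = 1 ∧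
        ∀ j, e j = 0 → Matrix.vecMul d K j = 0 := by
  constructor
  · rintro ⟨u', u'', h1, h2, h3⟩
    refine ⟨u' - u'', fun j hj => by rw [Pi.sub_apply, sub_eq_zero]; exact h1 j hj,
      (zmod2_ne_zero_iff _).1 (by rw [Pi.sub_apply]; exact sub_ne_zero.2 h2), fun j hj => ?_⟩
    rw [Matrix.sub_vecMul, Pi.sub_apply, sub_eq_zero]
    exact h3 j hj
  · rintro ⟨d, hd, hdi, hdK⟩
    refine ⟨d, 0, fun j hj => hd j (by exact_mod_cast hj), by rw [hdi]; simp, fun j hj => ?_⟩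
    rw [Matrix.zero_vecMul]
    rw [show (0 : Fin ℓ → ZMod 2) j = 0 from rfl]
    exact hdK j hj

end Aux

section Dichotomy

open Matrix Finset

variable {ℓ : ℕ}

lemma rev_val (i : Fin ℓ) : ((Fin.rev i : Fin ℓ) : ℕ) = ℓ - 1 - (i : ℕ) := by
  have h : ((Fin.rev i : Fin ℓ) : ℕ) = ℓ - ((i : ℕ) + 1) := rfl
  omega

lemma mem_dualCode {C : Submodule (ZMod 2) (Fin ℓ → ZMod 2)} {v : Fin ℓ → ZMod 2} :
    v ∈ dualCode C ↔ ∀ c ∈ C, ∑ j, v j * c j = 0 := Iff.rfl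

lemma hsd1 {K : Matrix (Fin ℓ) (Fin ℓ) (ZMod 2)} (hsd : SelfDual K) (i : Fin ℓ) :
    kernelCode K (ℓ - 1 - (i : ℕ)) = dualCode (kernelCode K ((i : ℕ) + 1)) := by
  have hi := i.isLt
  have := hsd (ℓ - 1 - (i : ℕ)) (by omega)
  rwa [show ℓ - (ℓ - 1 - (i : ℕ)) = (i : ℕ) + 1 by omega] at this

lemma hsd2 {K : Matrix (Fin ℓ) (Fin ℓ) (ZMod 2)} (hsd : SelfDual K) (i : Fin ℓ) :
    kernelCode K (ℓ - (i : ℕ)) = dualCode (kernelCode K (i : ℕ)) := by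
  have hi := i.isLt
  have := hsd (ℓ - (i : ℕ)) (by omega)
  rwa [show ℓ - (ℓ - (i : ℕ)) = (i : ℕ) by omega] at this

lemma vecMul_inj {K : Matrix (Fin ℓ) (Fin ℓ) (ZMod 2)} (hK : IsUnit K.det)
    {a b : Fin ℓ → ZMod 2} (h : Matrix.vecMul a K = Matrix.vecMul b K) : a = b := by
  have := congrArg (fun v => Matrix.vecMul v K⁻¹) h
  simpa [Matrix.vecMul_vecMul, Matrix.mul_nonsing_inv K hK] using this

/-- Exclusivity: `e` and its complement cannot both be uncorrectable (for channel `i`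
resp. `rev i`). -/
lemma not_both {K : Matrix (Fin ℓ) (Fin ℓ) (ZMod 2)} (hK : IsUnit K.det) (hsd : SelfDual K)
    (i : Fin ℓ) (e : Fin ℓ → ZMod 2) (h1 : Uncorrectable K i e)
    (h2 : Uncorrectable K i.rev (fun j => 1 + e j)) : False := by
  obtain ⟨d, hd0, hdi, hdE⟩ := (uncorrectable_iff K i e).1 h1
  obtain ⟨a, ha0, hai, haE⟩ := (uncorrectable_iff K i.rev _).1 h2
  set u := Matrix.vecMul a K with hu
  -- u lies in the dual of C_{i+1}
  have hu_mem : u ∈ kernelCode K (ℓ - 1 - (i : ℕ)) :=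
    (mem_kernelCode_iff _ _ _).2 ⟨a, fun j hj => ha0 j (by rw [rev_val]; omega), rfl⟩
  have hu_dual : ∀ c ∈ kernelCode K ((i : ℕ) + 1), ∑ j, u j * c j = 0 := by
    rw [hsd1 hsd i] at hu_mem; exact hu_mem
  -- the pairing of u with v := dK is zero (disjoint supports)
  have hP : ∑ j, u j * Matrix.vecMul d K j = 0 := by
    refine Finset.sum_eq_zero fun j _ => ?_
    by_cases hej : e j = 0
    · rw [hdE j hej, mul_zero]
    · have : (1 : ZMod 2) + e j = 0 := by
        rw [(zmod2_ne_zero_iff _).1 hej]; decide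
      rw [haE j this, zero_mul]
  -- decompose v = v' + K i with v' ∈ C_{i+1}
  have hd' : ∀ j : Fin ℓ, (j : ℕ) < (i : ℕ) + 1 → (d - (Pi.single i 1 : Fin ℓ → ZMod 2)) j = 0 := by
    intro j hj
    rcases eq_or_ne j i with rfl | hne
    · simp [hdi]
    · have : (j : ℕ) < (i : ℕ) := by
        rcases Nat.lt_succ_iff_lt_or_eq.1 hj with h | h
        · exact h
        · exact absurd (Fin.ext h) hne
      simp [hd0 j this, Pi.single_eq_of_ne hne]
  have hvd : Matrix.vecMul d K = Matrix.vecMul (d - (Pi.single i 1 : Fin ℓ → ZMod 2)) K + K i := by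
    rw [Matrix.sub_vecMul, Matrix.single_one_vecMul, Matrix.row]
    ring
  have hmem' : Matrix.vecMul (d - (Pi.single i 1 : Fin ℓ → ZMod 2)) K ∈ kernelCode K ((i : ℕ) + 1) :=
    (mem_kernelCode_iff _ _ _).2 ⟨_, hd', rfl⟩
  have hrow : ∑ j, u j * K i j = 0 := by
    have := hP
    rw [hvd] at this
    simp only [Pi.add_apply, mul_add, Finset.sum_add_distrib] at this
    rwa [hu_dual _ hmem', zero_add] at this
  -- but u ∉ dual of C_i, which forces pairing with the row K i to be nonzero
  have hu_not : u ∉ kernelCode K (ℓ - (i : ℕ)) := by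
    intro hmem
    obtain ⟨b, hb0, hbeq⟩ := (mem_kernelCode_iff _ _ _).1 hmem
    have hab : a = b := vecMul_inj hK hbeq
    have := hb0 i.rev (by rw [rev_val]; have := i.isLt; omega)
    rw [← hab, hai] at this
    exact one_ne_zero this
  rw [hsd2 hsd i] at hu_not
  apply hu_not
  rw [mem_dualCode]
  intro c hc
  obtain ⟨b, hb0, rfl⟩ := (mem_kernelCode_iff _ _ _).1 hc
  have hb' : ∀ j : Fin ℓ, (j : ℕ) < (i : ℕ) + 1 → (b - b i • (Pi.single i 1 : Fin ℓ → ZMod 2)) j = 0 := by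
    intro j hj
    rcases eq_or_ne j i with rfl | hne
    · simp
    · have : (j : ℕ) < (i : ℕ) := by
        rcases Nat.lt_succ_iff_lt_or_eq.1 hj with h | h
        · exact h
        · exact absurd (Fin.ext h) hne
      simp [hb0 j this, Pi.single_eq_of_ne hne]
  have hbd : Matrix.vecMul b K = Matrix.vecMul (b - b i • (Pi.single i 1 : Fin ℓ → ZMod 2)) K + b i • K i := by
    rw [Matrix.sub_vecMul, Matrix.smul_vecMul, Matrix.single_one_vecMul, Matrix.row]
    ring
  rw [hbd]
  simp only [Pi.add_apply, Pi.smul_apply, smul_eq_mul, mul_add, Finset.sum_add_distrib]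
  rw [hu_dual _ ((mem_kernelCode_iff _ _ _).2 ⟨_, hb', rfl⟩), zero_add]
  have : ∑ j, u j * (b i * K i j) = b i * ∑ j, u j * K i j := by
    rw [Finset.mul_sum]; congr 1; funext j; ring
  rw [this, hrow, mul_zero]

end Dichotomy

section Exhaustive

open Matrix Finset

variable {ℓ : ℕ}

/-- The linear map recording the data available to the decoder of bit-channel `i`:
the previous bits and the unerased outputs. -/
noncomputable def obsMap (K : Matrix (Fin ℓ) (Fin ℓ) (ZMod 2)) (i : Fin ℓ)
    (e : Fin ℓ → ZMod 2) :
    (Fin ℓ → ZMod 2) →ₗ[ZMod 2] (Fin ℓ → ZMod 2) × (Fin ℓ → ZMod 2) where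
  toFun d := (fun j => if (j : ℕ) < (i : ℕ) then d j else 0,
    fun j => if e j = 0 then Matrix.vecMul d K j else 0)
  map_add' x y := by
    refine Prod.ext (funext fun j => ?_) (funext fun j => ?_) <;> dsimp <;>
      split <;> simp [Matrix.add_vecMul]
  map_smul' r x := by
    refine Prod.ext (funext fun j => ?_) (funext fun j => ?_) <;> dsimp <;>
      split <;> simp [Matrix.smul_vecMul]

lemma obsMap_fst (K : Matrix (Fin ℓ) (Fin ℓ) (ZMod 2)) (i : Fin ℓ) (e d : Fin ℓ → ZMod 2)
    (j : Fin ℓ) : (obsMap K i e d).1 j = if (j : ℕ) < (i : ℕ) then d j else 0 := rfl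

lemma obsMap_snd (K : Matrix (Fin ℓ) (Fin ℓ) (ZMod 2)) (i : Fin ℓ) (e d : Fin ℓ → ZMod 2)
    (j : Fin ℓ) : (obsMap K i e d).2 j = if e j = 0 then Matrix.vecMul d K j else 0 := rfl

lemma exhaustive {K : Matrix (Fin ℓ) (Fin ℓ) (ZMod 2)} (hsd : SelfDual K)
    (i : Fin ℓ) (e : Fin ℓ → ZMod 2) (h1 : ¬ Uncorrectable K i e) :
    Uncorrectable K i.rev (fun j => 1 + e j) := by
  classical
  have hno : ∀ d : Fin ℓ → ZMod 2, (∀ j : Fin ℓ, (j : ℕ) < (i : ℕ) → d j = 0) →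
      (∀ j, e j = 0 → Matrix.vecMul d K j = 0) → d i = 0 := by
    intro d hd0 hdE
    by_contra hne
    exact h1 ((uncorrectable_iff K i e).2 ⟨d, hd0, (zmod2_ne_zero_iff _).1 hne, hdE⟩)
  set Φ := obsMap K i e with hΦ
  have hker : LinearMap.ker Φ ≤ LinearMap.ker (LinearMap.proj (R := ZMod 2)
      (φ := fun _ : Fin ℓ => ZMod 2) i) := by
    intro d hd
    rw [LinearMap.mem_ker] at hd
    have hd1 : ∀ j : Fin ℓ, (j : ℕ) < (i : ℕ) → d j = 0 := by
      intro j hj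
      have h : d j = (Φ d).1 j := by rw [hΦ, obsMap_fst, if_pos hj]
      rw [h, hd]; rfl
    have hd2 : ∀ j, e j = 0 → Matrix.vecMul d K j = 0 := by
      intro j hj
      have h : Matrix.vecMul d K j = (Φ d).2 j := by rw [hΦ, obsMap_snd, if_pos hj]
      rw [h, hd]; rfl
    exact hno d hd1 hd2
  -- factor the functional `d ↦ d i` through Φ
  obtain ⟨g, hg⟩ : ∃ g : (Fin ℓ → ZMod 2) × (Fin ℓ → ZMod 2) →ₗ[ZMod 2] ZMod 2,
      ∀ d, g (Φ d) = d i := by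
    obtain ⟨g, hg⟩ := LinearMap.exists_extend
      (((LinearMap.ker Φ).liftQ (LinearMap.proj i) hker).comp
        (Φ.quotKerEquivRange.symm : LinearMap.range Φ →ₗ[ZMod 2] _))
    refine ⟨g, fun d => ?_⟩
    have h0 : Φ.quotKerEquivRange (Submodule.Quotient.mk d) =
        ⟨Φ d, LinearMap.mem_range_self Φ d⟩ :=
      Subtype.ext (LinearMap.quotKerEquivRange_apply_mk Φ d)
    have h1 : Φ.quotKerEquivRange.symm ⟨Φ d, LinearMap.mem_range_self Φ d⟩ =
        Submodule.Quotient.mk d := by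
      rw [← h0, LinearEquiv.symm_apply_apply]
    have := LinearMap.congr_fun hg ⟨Φ d, LinearMap.mem_range_self Φ d⟩
    simpa [h1] using this
  -- representation of g on each factor
  set c1 : Fin ℓ → ZMod 2 := fun j => g ((Pi.single j 1 : Fin ℓ → ZMod 2), 0) with hc1
  set x : Fin ℓ → ZMod 2 :=
    fun j => if e j = 0 then g (0, (Pi.single j 1 : Fin ℓ → ZMod 2)) else 0 with hx
  have master : ∀ d : Fin ℓ → ZMod 2,
      d i = ∑ j : Fin ℓ, (if (j : ℕ) < (i : ℕ) then d j else 0) * c1 j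
        + ∑ j : Fin ℓ, Matrix.vecMul d K j * x j := by
    intro d
    rw [← hg d]
    have hsplit : Φ d = (∑ j : Fin ℓ, (if (j : ℕ) < (i : ℕ) then d j else 0) •
          ((Pi.single j 1 : Fin ℓ → ZMod 2), (0 : Fin ℓ → ZMod 2)))
        + ∑ j : Fin ℓ, (if e j = 0 then Matrix.vecMul d K j else 0) •
          ((0 : Fin ℓ → ZMod 2), (Pi.single j 1 : Fin ℓ → ZMod 2)) := by
      refine Prod.ext (funext fun j => ?_) (funext fun j => ?_) <;>
        · simp only [Prod.fst_add, Prod.snd_add, Prod.fst_sum, Prod.snd_sum, Prod.smul_mk,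
            Pi.add_apply, Finset.sum_apply, Pi.smul_apply, smul_eq_mul, smul_zero,
            Prod.fst_zero, Prod.snd_zero, Pi.zero_apply, mul_zero, Finset.sum_const_zero,
            hΦ, obsMap_fst, obsMap_snd]
          rw [Finset.sum_eq_single j (fun k _ hk => by
              rw [Pi.single_eq_of_ne (Ne.symm hk), mul_zero])
            (fun h => absurd (Finset.mem_univ j) h)]
          simp [Pi.single_eq_same]
    rw [hsplit, map_add, map_sum, map_sum]
    simp only [_root_.map_smul, smul_eq_mul]
    congr 1
    apply Finset.sum_congr rfl
    intro j _
    by_cases hej : e j = 0 <;> simp [hej, hx, hc1]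
  -- x is in the dual of C_{i+1} ...
  have hxdual : x ∈ dualCode (kernelCode K ((i : ℕ) + 1)) := by
    rw [mem_dualCode]
    intro c hc
    obtain ⟨b, hb0, rfl⟩ := (mem_kernelCode_iff _ _ _).1 hc
    have hm := master b
    rw [hb0 i (by omega)] at hm
    rw [Finset.sum_eq_zero (fun j _ => by
      split
      · rename_i hj
        rw [hb0 j (by omega), zero_mul]
      · rw [zero_mul])] at hm
    rw [zero_add] at hm
    rw [Finset.sum_congr rfl (fun j _ => mul_comm (x j) (Matrix.vecMul b K j))]
    exact hm.symm
  -- ... but not in the dual of C_i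
  have hrow : ∑ j : Fin ℓ, Matrix.vecMul (Pi.single i 1 : Fin ℓ → ZMod 2) K j * x j = 1 := by
    have hm := master (Pi.single i 1 : Fin ℓ → ZMod 2)
    rw [Pi.single_eq_same] at hm
    rw [Finset.sum_eq_zero (fun j _ => by
      split
      · rename_i hj
        rw [Pi.single_eq_of_ne (fun h => by subst h; exact absurd hj (lt_irrefl _)), zero_mul]
      · rw [zero_mul])] at hm
    rw [zero_add] at hm
    exact hm.symm
  have hxnot : x ∉ dualCode (kernelCode K (i : ℕ)) := by
    intro hmem
    have hrowmem : Matrix.vecMul (Pi.single i 1 : Fin ℓ → ZMod 2) K ∈ kernelCode K (i : ℕ) :=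
      (mem_kernelCode_iff _ _ _).2
        ⟨(Pi.single i 1 : Fin ℓ → ZMod 2),
          fun j hj => Pi.single_eq_of_ne (fun h => by subst h; exact absurd hj (lt_irrefl _)) 1,
          rfl⟩
    have h := (mem_dualCode).1 hmem _ hrowmem
    rw [Finset.sum_congr rfl
      (fun j _ => mul_comm (x j) (Matrix.vecMul (Pi.single i 1 : Fin ℓ → ZMod 2) K j))] at h
    rw [hrow] at h
    exact one_ne_zero h
  -- transport through self-duality and conclude
  have hxmem : x ∈ kernelCode K (ℓ - 1 - (i : ℕ)) := by rw [hsd1 hsd i]; exact hxdual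
  obtain ⟨a, ha0, hax⟩ := (mem_kernelCode_iff _ _ _).1 hxmem
  have hai : a i.rev = 1 := by
    rw [← zmod2_ne_zero_iff]
    intro hz
    apply hxnot
    rw [← hsd2 hsd i]
    refine (mem_kernelCode_iff _ _ _).2 ⟨a, fun j hj => ?_, hax⟩
    rcases Nat.lt_or_ge (j : ℕ) (ℓ - 1 - (i : ℕ)) with h | h
    · exact ha0 j h
    · have hji : j = i.rev := Fin.ext (by rw [rev_val]; have := i.isLt; omega)
      rw [hji]; exact hz
  refine (uncorrectable_iff K i.rev _).2 ⟨a, fun j hj => ha0 j (by rwa [rev_val] at hj), hai,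
    fun j hj => ?_⟩
  have hej : e j ≠ 0 := by
    intro h0
    rw [h0] at hj
    have h1 : (1 : ZMod 2) = 0 := by simpa using hj
    exact one_ne_zero h1
  rw [← hax, hx]
  simp [hej]

end Exhaustive

section Counting

open Matrix Finset

variable {ℓ : ℕ}

lemma zmod2_cases (x : ZMod 2) : x = 0 ∨ x = 1 := by revert x; decide

lemma zmod2_one_add_one_add (x : ZMod 2) : 1 + (1 + x) = x := by revert x; decide

/-- The dichotomy: `e` is uncorrectable for channel `i` iff its complement is
correctable for channel `rev i`. -/
lemma dichotomy {K : Matrix (Fin ℓ) (Fin ℓ) (ZMod 2)} (hK : IsUnit K.det) (hsd : SelfDual K)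
    (i : Fin ℓ) (e : Fin ℓ → ZMod 2) :
    Uncorrectable K i e ↔ ¬ Uncorrectable K i.rev (fun j => 1 + e j) := by
  constructor
  · exact fun h h2 => not_both hK hsd i e h h2
  · intro hn
    by_contra h1
    exact hn (exhaustive hsd i e h1)

lemma wt_le (e : Fin ℓ → ZMod 2) : wt e ≤ ℓ := by
  calc wt e ≤ (univ : Finset (Fin ℓ)).card := Finset.card_filter_le _ _
  _ = ℓ := Finset.card_fin ℓ

lemma wt_compl (e : Fin ℓ → ZMod 2) : wt (fun j => 1 + e j) = ℓ - wt e := by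
  have h1 : (univ.filter fun j => (1 : ZMod 2) + e j ≠ 0) =
      (univ.filter fun j => ¬ (e j ≠ 0)) := by
    apply Finset.filter_congr
    intro j _
    rcases zmod2_cases (e j) with h0 | h0 <;> rw [h0] <;> decide
  have h2 := Finset.card_filter_add_card_filter_not
    (s := (univ : Finset (Fin ℓ))) (p := fun j => e j ≠ 0)
  rw [Finset.card_fin] at h2
  show (univ.filter fun j => (1 : ZMod 2) + e j ≠ 0).card = ℓ - wt e
  rw [h1]
  have h3 : wt e = (univ.filter fun j => e j ≠ 0).card := rfl
  omega

open scoped Classical in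
lemma ecount_eq_card (K : Matrix (Fin ℓ) (Fin ℓ) (ZMod 2)) (i : Fin ℓ) (w : ℕ) :
    Ecount K i w = (univ.filter fun e => Uncorrectable K i e ∧ wt e = w).card := by
  rw [Ecount, Nat.card_eq_fintype_card, Fintype.card_subtype]

lemma card_wt_eq (w : ℕ) :
    (univ.filter fun e : Fin ℓ → ZMod 2 => wt e = w).card = ℓ.choose w := by
  have key : (univ.filter fun e : Fin ℓ → ZMod 2 => wt e = w).card =
      (Finset.powersetCard w (univ : Finset (Fin ℓ))).card := by
    apply Finset.card_bij (fun e _ => univ.filter fun j => e j ≠ 0)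
    · intro e he
      rw [Finset.mem_powersetCard]
      exact ⟨Finset.subset_univ _, (Finset.mem_filter.1 he).2⟩
    · intro e he e' he' h
      funext j
      have hj : e j ≠ 0 ↔ e' j ≠ 0 := by
        constructor <;> intro hne
        · have hm : j ∈ univ.filter fun j => e j ≠ 0 :=
            Finset.mem_filter.2 ⟨Finset.mem_univ _, hne⟩
          rw [h] at hm
          exact (Finset.mem_filter.1 hm).2
        · have hm : j ∈ univ.filter fun j => e' j ≠ 0 :=
            Finset.mem_filter.2 ⟨Finset.mem_univ _, hne⟩
          rw [← h] at hm
          exact (Finset.mem_filter.1 hm).2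
      rcases zmod2_cases (e j) with h0 | h0 <;> rcases zmod2_cases (e' j) with h0' | h0' <;>
        rw [h0, h0'] <;> rw [h0, h0'] at hj <;> first | rfl | simp at hj
    · intro s hs
      rw [Finset.mem_powersetCard] at hs
      have hfil : (univ.filter fun j => (if j ∈ s then (1 : ZMod 2) else 0) ≠ 0) = s := by
        ext j
        by_cases hj : j ∈ s <;> simp [hj]
      refine ⟨fun j => if j ∈ s then (1 : ZMod 2) else 0, ?_, hfil⟩
      rw [Finset.mem_filter]
      refine ⟨Finset.mem_univ _, ?_⟩
      show (univ.filter fun j => (if j ∈ s then (1 : ZMod 2) else 0) ≠ 0).card = w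
      rw [hfil, hs.2]
  rw [key, Finset.card_powersetCard, Finset.card_fin]

end Counting

open scoped Classical in
/-- For a self-dual kernel, the duality lemma holds with equality:
`E_{i,w} + E_{ℓ+1-i,ℓ-w} = binom(ℓ,w)`. -/
theorem duality_lemma_eq {ℓ : ℕ} (hℓ : 0 < ℓ)
    (K : Matrix (Fin ℓ) (Fin ℓ) (ZMod 2)) (hK : IsUnit K.det)
    (hsd : SelfDual K) (i : Fin ℓ) (w : ℕ) (hw : w ≤ ℓ) :
    Ecount K i w + Ecount K i.rev (ℓ - w) = ℓ.choose w := by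
  rw [ecount_eq_card, ecount_eq_card]
  -- rewrite the second count via the complementation bijection
  have hbij : (Finset.univ.filter fun e => Uncorrectable K i.rev e ∧ wt e = ℓ - w).card =
      (Finset.univ.filter fun e => ¬ Uncorrectable K i e ∧ wt e = w).card := by
    apply Finset.card_bij (fun e _ => fun j => 1 + e j)
    · intro f hf
      rw [Finset.mem_filter] at hf ⊢
      obtain ⟨-, hunc, hwt⟩ := hf
      refine ⟨Finset.mem_univ _, ?_, ?_⟩
      · intro hu
        have hcon := (dichotomy hK hsd i (fun j => 1 + f j)).1 hu
        apply hcon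
        have hff : (fun j => 1 + (fun j => 1 + f j) j) = f := by
          funext j; exact zmod2_one_add_one_add (f j)
        rw [hff]
        exact hunc
      · rw [wt_compl, hwt]
        omega
    · intro f hf f' hf' h
      funext j
      have h1 := congrFun h j
      have h2 := congrArg (fun x => 1 + x) h1
      simpa [zmod2_one_add_one_add] using h2
    · intro e he
      rw [Finset.mem_filter] at he
      obtain ⟨-, hunc, hwt⟩ := he
      refine ⟨fun j => 1 + e j, Finset.mem_filter.2 ⟨Finset.mem_univ _, ?_, ?_⟩, ?_⟩
      · by_contra hn
        exact hunc ((dichotomy hK hsd i e).2 hn)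
      · rw [wt_compl, hwt]
      · funext j; exact zmod2_one_add_one_add (e j)
  rw [hbij]
  -- the two sets partition the weight-w sphere
  have hsplit :
      (Finset.univ.filter fun e => Uncorrectable K i e ∧ wt e = w).card +
        (Finset.univ.filter fun e => ¬ Uncorrectable K i e ∧ wt e = w).card =
      (Finset.univ.filter fun e : Fin ℓ → ZMod 2 => wt e = w).card := by
    have h1 : (Finset.univ.filter fun e => Uncorrectable K i e ∧ wt e = w) =
        (Finset.univ.filter fun e : Fin ℓ → ZMod 2 => wt e = w).filter
          (fun e => Uncorrectable K i e) := by
      rw [Finset.filter_filter]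
      exact Finset.filter_congr fun e _ => and_comm
    have h2 : (Finset.univ.filter fun e => ¬ Uncorrectable K i e ∧ wt e = w) =
        (Finset.univ.filter fun e : Fin ℓ → ZMod 2 => wt e = w).filter
          (fun e => ¬ Uncorrectable K i e) := by
      rw [Finset.filter_filter]
      exact Finset.filter_congr fun e _ => and_comm
    rw [h1, h2]
    exact Finset.card_filter_add_card_filter_not _
  rw [hsplit, card_wt_eq]
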